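/- The adversarial risk does not increase under opening/closing: for any measurable set A, R^ε((A^ε)^{-ε}) ≤ R^ε(A) and R^ε((A^{-ε})^ε) ≤ R^ε(A). -/

import Mathlib

open Set Metric MeasureTheory
open scoped ENNReal

/-- The closed ε-expansion of a set: `A^ε = ⋃_{a ∈ A} closedBall a ε`. -/
def expand {E : Type*} [NormedAddCommGroup E] (ε : ℝ) (A : Set E) : Set E :=
  ⋃ a ∈ A, closedBall a ε

/-- The ε-contraction of a set: `A^{-ε} = ((A^c)^ε)^c`. -/
def contract {E : Type*} [NormedAddCommGroup E] (ε : ℝ) (A : Set E) : Set E :=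
  (expand ε Aᶜ)ᶜ

/-- The adversarial risk
`R^ε(A) = ∫ (1 − η x)·1_{A^ε}(x) + η x·1_{(Aᶜ)^ε}(x) dP`. -/
noncomputable def advRisk {E : Type*} [NormedAddCommGroup E] [MeasurableSpace E]
    (P : Measure E) (η : E → ℝ) (ε : ℝ) (A : Set E) : ℝ≥0∞ :=
  ∫⁻ x, ENNReal.ofReal (1 - η x) * (expand ε A).indicator (fun _ => (1 : ℝ≥0∞)) x
      + ENNReal.ofReal (η x) * (expand ε Aᶜ).indicator (fun _ => (1 : ℝ≥0∞)) x ∂P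

lemma mem_expand_iff {E : Type*} [NormedAddCommGroup E] {ε : ℝ} {A : Set E} {x : E} :
    x ∈ expand ε A ↔ ∃ a ∈ A, dist x a ≤ ε := by
  simp [expand, mem_iUnion, mem_closedBall]

lemma expand_mono {E : Type*} [NormedAddCommGroup E] {ε : ℝ} {A B : Set E}
    (h : A ⊆ B) : expand ε A ⊆ expand ε B := by
  intro x hx
  rw [mem_expand_iff] at hx ⊢
  obtain ⟨a, ha, hd⟩ := hx
  exact ⟨a, h ha, hd⟩

lemma expand_contract_subset {E : Type*} [NormedAddCommGroup E] (ε : ℝ) (C : Set E) :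
    expand ε (contract ε C) ⊆ C := by
  intro x hx
  rw [mem_expand_iff] at hx
  obtain ⟨a, ha, hd⟩ := hx
  by_contra hxC
  exact ha (mem_expand_iff.2 ⟨x, hxC, by rwa [dist_comm]⟩)

lemma expand_expand_compl_expand {E : Type*} [NormedAddCommGroup E] (ε : ℝ) (A : Set E) :
    expand ε (expand ε (expand ε A)ᶜ) ⊆ expand ε Aᶜ := by
  intro x hx
  rw [mem_expand_iff] at hx
  obtain ⟨y, hy, hxy⟩ := hx
  rw [mem_expand_iff] at hy
  obtain ⟨z, hz, hyz⟩ := hy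
  refine mem_expand_iff.2 ⟨y, fun hyA => ?_, hxy⟩
  exact hz (mem_expand_iff.2 ⟨y, hyA, by rwa [dist_comm]⟩)

lemma expand_compl_opening {E : Type*} [NormedAddCommGroup E] (ε : ℝ) (A : Set E) :
    expand ε (expand ε (contract ε A))ᶜ ⊆ expand ε Aᶜ := by
  intro x hx
  rw [mem_expand_iff] at hx
  obtain ⟨y, hy, hxy⟩ := hx
  by_contra hxA
  have hx' : x ∈ contract ε A := hxA
  exact hy (mem_expand_iff.2 ⟨x, hx', by rwa [dist_comm]⟩)

lemma advRisk_mono_aux {E : Type*} [NormedAddCommGroup E] [MeasurableSpace E]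
    (P : Measure E) (η : E → ℝ) (ε : ℝ) (A B : Set E)
    (h1 : expand ε B ⊆ expand ε A) (h2 : expand ε Bᶜ ⊆ expand ε Aᶜ) :
    advRisk P η ε B ≤ advRisk P η ε A := by
  refine lintegral_mono fun x => ?_
  gcongr

/-- The adversarial risk does not increase under the closing `(A^ε)^{-ε}` and the
opening `(A^{-ε})^ε`. -/
theorem advRisk_closing_opening_le {E : Type*} [NormedAddCommGroup E]
    [MeasurableSpace E] [BorelSpace E] (P : Measure E) [IsProbabilityMeasure P]
    (η : E → ℝ) (hη : Measurable η) (hη0 : ∀ x, 0 ≤ η x) (hη1 : ∀ x, η x ≤ 1)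
    (ε : ℝ) (A : Set E) (hA : MeasurableSet A) :
    advRisk P η ε (contract ε (expand ε A)) ≤ advRisk P η ε A ∧
      advRisk P η ε (expand ε (contract ε A)) ≤ advRisk P η ε A := by
  constructor
  · refine advRisk_mono_aux P η ε A _ (expand_contract_subset ε (expand ε A)) ?_
    have : (contract ε (expand ε A))ᶜ = expand ε (expand ε A)ᶜ := by
      simp [contract]
    rw [this]
    exact expand_expand_compl_expand ε A
  · refine advRisk_mono_aux P η ε A _ ?_ (expand_compl_opening ε A)
    exact expand_mono (expand_contract_subset ε A)
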